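/- Let A be a p×L complex matrix, Q a p×p positive semidefinite Hermitian matrix, and Z an L×L positive semidefinite Hermitian matrix satisfying Q = A·Z·Aᴴ. If the number of nonzero rows of Z is at most the Kruskal rank σ(A), then rank(Z) = rank(Q). -/

import Mathlib

open Matrix Set
open scoped ComplexOrder

/-- The Kruskal rank of a matrix `A`: the maximal number `q` such that every
set of `q` columns of `A` is linearly independent. -/
noncomputable def kruskalRank {p L : ℕ} (A : Matrix (Fin p) (Fin L) ℂ) : ℕ :=
  sSup {q | q ≤ L ∧ ∀ S : Finset (Fin L), S.card = q →
    LinearIndependent ℂ (fun j : S => A.transpose (j : Fin L))}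

lemma kruskalRank_mem {p L : ℕ} (A : Matrix (Fin p) (Fin L) ℂ) :
    kruskalRank A ≤ L ∧ ∀ S : Finset (Fin L), S.card = kruskalRank A →
      LinearIndependent ℂ (fun j : S => A.transpose (j : Fin L)) := by
  have h0 : (0 : ℕ) ∈ {q | q ≤ L ∧ ∀ S : Finset (Fin L), S.card = q →
      LinearIndependent ℂ (fun j : S => A.transpose (j : Fin L))} := by
    refine ⟨Nat.zero_le _, fun S hS => ?_⟩
    rw [Finset.card_eq_zero] at hS
    subst hS
    have : IsEmpty ((∅ : Finset (Fin L)) : Finset (Fin L)) := by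
      simp [Finset.isEmpty_coe_sort]
      exact ⟨fun x => x.2⟩
    exact linearIndependent_empty_type
  have hbdd : BddAbove {q | q ≤ L ∧ ∀ S : Finset (Fin L), S.card = q →
      LinearIndependent ℂ (fun j : S => A.transpose (j : Fin L))} :=
    ⟨L, fun q hq => hq.1⟩
  exact Nat.sSup_mem ⟨0, h0⟩ hbdd

theorem stmt3 {p L : ℕ} (A : Matrix (Fin p) (Fin L) ℂ)
    (Q : Matrix (Fin p) (Fin p) ℂ) (Z : Matrix (Fin L) (Fin L) ℂ)
    (hQ : Q.PosSemidef) (hZ : Z.PosSemidef)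
    (hEq : Q = A * Z * Aᴴ)
    (h : {k | Z k ≠ 0}.ncard ≤ kruskalRank A) :
    Z.rank = Q.rank := by
  classical
  obtain ⟨hσL, hσ⟩ := kruskalRank_mem A
  obtain ⟨W, hW, hWW⟩ : ∃ W : Matrix (Fin L) (Fin L) ℂ, W.PosSemidef ∧ W * W = Z := by
    open scoped MatrixOrder in
    exact ⟨CFC.sqrt Z, (CFC.sqrt_nonneg Z).posSemidef, CFC.sqrt_mul_sqrt_self Z hZ.nonneg⟩
  have hWH : Wᴴ = W := hW.1
  -- rows of W vanish where rows of Z vanish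
  have hrow : ∀ k, Z k = 0 → ∀ j, W k j = 0 := by
    intro k hk j
    have hdiag : (0 : ℂ) = ∑ i, W k i * star (W k i) := by
      have : Z k k = ∑ i, W k i * W i k := by
        rw [← hWW]; rfl
      rw [hk] at this
      simp only [Pi.zero_apply] at this
      rw [this]
      refine Finset.sum_congr rfl fun i _ => ?_
      congr 1
      conv_lhs => rw [← hWH]
      rfl
    have hsum : ∑ i, Complex.normSq (W k i) = 0 := by
      have := congrArg Complex.re hdiag
      simpa [Complex.mul_conj, Complex.re_sum] using this.symm
    have := (Finset.sum_eq_zero_iff_of_nonneg (fun i _ => Complex.normSq_nonneg _)).mp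
      hsum j (Finset.mem_univ _)
    exact Complex.normSq_eq_zero.mp this
  -- kernel equality
  have hker : LinearMap.ker (A * W).mulVecLin = LinearMap.ker W.mulVecLin := by
    ext x
    simp only [LinearMap.mem_ker, mulVecLin_apply]
    constructor
    · intro hx
      set v := W.mulVec x with hv
      have hAv : A.mulVec v = 0 := by
        rw [hv, mulVec_mulVec]; exact hx
      -- support of v
      have hsupp : ∀ k, Z k = 0 → v k = 0 := by
        intro k hk
        simp only [hv, mulVec, dotProduct]
        exact Finset.sum_eq_zero fun j _ => by rw [hrow k hk j, zero_mul]
      set T : Finset (Fin L) := Finset.univ.filter (fun k => v k ≠ 0) with hT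
      have hTsub : (T : Set (Fin L)) ⊆ {k | Z k ≠ 0} := by
        intro k hk
        simp only [hT, Finset.coe_filter, Set.mem_setOf_eq, Finset.mem_univ, true_and] at hk
        intro hZk
        exact hk (hsupp k hZk)
      have hTcard : T.card ≤ kruskalRank A := by
        have h1 : (T : Set (Fin L)).ncard ≤ {k | Z k ≠ 0}.ncard :=
          Set.ncard_le_ncard hTsub (Set.toFinite _)
        rw [Set.ncard_coe_finset] at h1
        exact h1.trans h
      obtain ⟨S, hTS, _, hScard⟩ := Finset.exists_subsuperset_card_eq
        (Finset.subset_univ T) hTcard (by simpa using hσL)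
      have hLI := hσ S hScard
      have hvS : ∀ j : Fin L, j ∉ S → v j = 0 := by
        intro j hj
        by_contra hvj
        exact hj (hTS (by simp [hT, hvj]))
      have hsum : ∑ j : S, v (j : Fin L) • (A.transpose (j : Fin L)) = 0 := by
        funext i
        have : ∑ j : S, v (j : Fin L) * A i (j : Fin L) = ∑ j, v j * A i j := by
          rw [Finset.sum_coe_sort S (fun j => v j * A i j)]
          exact Finset.sum_subset (Finset.subset_univ S)
            (fun j _ hj => show v j * A i j = 0 by rw [hvS j hj, zero_mul])
        have hAvi : ∑ j, A i j * v j = 0 := congrFun hAv i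
        simp only [Finset.sum_apply, Pi.smul_apply, Pi.zero_apply, smul_eq_mul,
          Matrix.transpose_apply]
        rw [this]
        rw [← hAvi]
        exact Finset.sum_congr rfl fun j _ => mul_comm _ _
      have hvzero : ∀ j : S, v (j : Fin L) = 0 :=
        Fintype.linearIndependent_iff.mp hLI (fun j => v (j : Fin L)) hsum
      funext k
      by_cases hk : k ∈ S
      · exact hvzero ⟨k, hk⟩
      · exact hvS k hk
    · intro hx
      rw [← mulVec_mulVec, hx, mulVec_zero]
  -- ranks via rank-nullity
  have hrank_AW : (A * W).rank = W.rank := by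
    have h1 := LinearMap.finrank_range_add_finrank_ker (A * W).mulVecLin
    have h2 := LinearMap.finrank_range_add_finrank_ker W.mulVecLin
    rw [hker] at h1
    have : Module.finrank ℂ (LinearMap.range (A * W).mulVecLin) =
        Module.finrank ℂ (LinearMap.range W.mulVecLin) := by omega
    exact this
  have hZrank : Z.rank = W.rank := by
    have hZW : Z = Wᴴ * W := by rw [hWH, hWW]
    rw [hZW, rank_conjTranspose_mul_self]
  have hQrank : Q.rank = (A * W).rank := by
    have : Q = (A * W) * (A * W)ᴴ := by
      rw [hEq, ← hWW, conjTranspose_mul, hWH]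
      simp only [Matrix.mul_assoc]
    rw [this, rank_self_mul_conjTranspose]
  rw [hZrank, hQrank, hrank_AW]
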